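/- Let v, r_d, c1, c2 > 0, ω_c = v/r_d, Δ = (c1·ω_c)² − 4·(c2·ω_c + ω_c²), and set ρ = (c1·ω_c − √Δ)/2 if Δ > 0 and ρ = c1·ω_c/2 otherwise. Then ρ > 0 and every complex root λ of the quadratic λ² + c1·ω_c·λ + (c2·ω_c + ω_c²) = 0 satisfies Re(λ) ≤ −ρ. Equivalently, every complex eigenvalue of the real 2×2 matrix F = [[0, −v], [(c2 + ω_c)/r_d, −c1·ω_c]] (the Jacobian of the closed-loop system at the equilibrium (r_d, π/2)) has real part at most −ρ; in particular F is Hurwitz. -/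

import Mathlib

open Real

/-- The linearization at the equilibrium `(r_d, π/2)` is Hurwitz: every root of the
characteristic polynomial `λ² + c1·ω_c·λ + (c2·ω_c + ω_c²)` — equivalently every
eigenvalue of `F = [[0, −v], [(c2+ω_c)/r_d, −c1·ω_c]]` — has real part at most `−ρ`,
with `ρ > 0` as defined below. -/
theorem linearization_hurwitz
    (v rd c1 c2 ωc Δ ρ : ℝ) (hv : 0 < v) (hrd : 0 < rd) (hc1 : 0 < c1) (hc2 : 0 < c2)
    (hωc : ωc = v / rd)
    (hΔ : Δ = (c1 * ωc) ^ 2 - 4 * (c2 * ωc + ωc ^ 2))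
    (hρ : ρ = if 0 < Δ then (c1 * ωc - Real.sqrt Δ) / 2 else c1 * ωc / 2) :
    0 < ρ ∧
    (∀ z : ℂ, z ^ 2 + (c1 * ωc : ℝ) * z + ((c2 * ωc + ωc ^ 2 : ℝ) : ℂ) = 0 →
      z.re ≤ -ρ) ∧
    (∀ μ ∈ spectrum ℂ
        ((!![0, -v; (c2 + ωc) / rd, -c1 * ωc] : Matrix (Fin 2) (Fin 2) ℝ).map
          (fun x : ℝ => (x : ℂ))),
      μ.re ≤ -ρ) := by
  have hωc0 : 0 < ωc := hωc ▸ div_pos hv hrd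
  have ha0 : 0 < c1 * ωc := mul_pos hc1 hωc0
  have hb0 : 0 < c2 * ωc + ωc ^ 2 := by positivity
  have hρ0 : 0 < ρ := by
    rw [hρ]
    split_ifs with h
    · have hlt : Real.sqrt Δ < c1 * ωc := by
        have : Real.sqrt Δ < Real.sqrt ((c1 * ωc) ^ 2) := by
          apply Real.sqrt_lt_sqrt h.le
          rw [hΔ]; nlinarith
        rwa [Real.sqrt_sq ha0.le] at this
      linarith
    · positivity
  have key : ∀ z : ℂ, z ^ 2 + (c1 * ωc : ℝ) * z + ((c2 * ωc + ωc ^ 2 : ℝ) : ℂ) = 0 →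
      z.re ≤ -ρ := by
    intro z hz
    have hw : (z + (c1 * ωc : ℝ) / 2) ^ 2 = ((Δ / 4 : ℝ) : ℂ) := by
      push_cast [hΔ] at hz ⊢
      linear_combination hz
    by_cases hΔ0 : 0 < Δ
    · have hs : (((Real.sqrt Δ / 2 : ℝ)) : ℂ) ^ 2 = ((Δ / 4 : ℝ) : ℂ) := by
        norm_cast
        rw [div_pow, Real.sq_sqrt hΔ0.le]
        norm_num
      have hmul : (z + (c1 * ωc : ℝ) / 2 - ((Real.sqrt Δ / 2 : ℝ) : ℂ)) *
          (z + (c1 * ωc : ℝ) / 2 + ((Real.sqrt Δ / 2 : ℝ) : ℂ)) = 0 := by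
        linear_combination hw - hs
      have hsnn : 0 ≤ Real.sqrt Δ := Real.sqrt_nonneg Δ
      rcases mul_eq_zero.mp hmul with h | h
      · have := congrArg Complex.re h
        simp [Complex.add_re, Complex.sub_re] at this
        rw [hρ, if_pos hΔ0]
        linarith
      · have := congrArg Complex.re h
        simp [Complex.add_re] at this
        rw [hρ, if_pos hΔ0]
        linarith
    · have hd : Δ / 4 ≤ 0 := by
        push_neg at hΔ0; linarith
      have h1 := congrArg Complex.re hw
      have h2 := congrArg Complex.im hw
      simp [pow_two, Complex.mul_re, Complex.mul_im, Complex.add_re, Complex.add_im] at h1 h2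
      set x := z.re + c1 * ωc / 2 with hx
      set y := z.im with hy
      clear_value x y
      have hxy : x * y = 0 := by linarith
      have hx0 : x = 0 := by
        rcases mul_eq_zero.mp hxy with h | h
        · exact h
        · have hx2 : x ^ 2 = 0 := le_antisymm (by rw [pow_two]; simp [h] at h1; linarith) (sq_nonneg x)
          exact pow_eq_zero_iff two_ne_zero |>.mp hx2
      rw [hρ, if_neg hΔ0]
      have : z.re = -(c1 * ωc / 2) := by
        have := hx0
        rw [hx] at this
        linarith
      linarith
  refine ⟨hρ0, key, ?_⟩
  intro μ hμ
  apply key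
  rw [spectrum.mem_iff] at hμ
  by_contra hne
  apply hμ
  set M := ((!![0, -v; (c2 + ωc) / rd, -c1 * ωc] : Matrix (Fin 2) (Fin 2) ℝ).map
      (fun x : ℝ => (x : ℂ))) with hM
  have hdet : (algebraMap ℂ (Matrix (Fin 2) (Fin 2) ℂ) μ - M).det ≠ 0 := by
    have hA : (algebraMap ℂ (Matrix (Fin 2) (Fin 2) ℂ) μ - M) =
        !![μ, (v : ℂ); -((c2 + ωc : ℝ) / rd : ℝ), μ + (c1 * ωc : ℝ)] := by
      rw [hM]
      ext i j
      fin_cases i <;> fin_cases j <;>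
        simp [Matrix.algebraMap_matrix_apply, Matrix.map_apply]
    rw [hA, Matrix.det_fin_two_of]
    intro h0
    apply hne
    have hrd' : (rd : ℝ) ≠ 0 := ne_of_gt hrd
    have hv' : (v : ℂ) * ((c2 + ωc : ℝ) / rd : ℝ) = ((c2 * ωc + ωc ^ 2 : ℝ) : ℂ) := by
      push_cast
      rw [hωc]
      have hrdC : (rd : ℂ) ≠ 0 := by exact_mod_cast hrd'
      push_cast
      field_simp
    linear_combination h0 - hv'
  exact (Matrix.isUnit_iff_isUnit_det _).mpr (isUnit_iff_ne_zero.mpr hdet)
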